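/- For a nonnegative n×n matrix A with λ(A) > 0, the subeigencone V*(A) = {y ∈ ℝ₊ⁿ : A⊗y ≤ λ(A)y} is simultaneously: closed under componentwise maximum and nonnegative scaling (a max cone), closed under nonnegative linear combinations (a convex cone), and closed under log-convex combinations (componentwise weighted geometric means of its elements lie in it). -/

import Mathlib

open Finset

/-- Max-times matrix product: `(A ⊗ B) i j = max_k (A i k * B k j)`. -/
noncomputable def mProd {n : ℕ} (A B : Matrix (Fin n) (Fin n) NNReal) :
    Matrix (Fin n) (Fin n) NNReal :=
  fun i j => univ.sup fun k => A i k * B k j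

/-- Max-algebraic matrix powers, `mPow A 0 = I`. -/
noncomputable def mPow {n : ℕ} (A : Matrix (Fin n) (Fin n) NNReal) :
    ℕ → Matrix (Fin n) (Fin n) NNReal
  | 0 => fun i j => if i = j then 1 else 0
  | k + 1 => mProd (mPow A k) A

/-- Kleene star `A* = I ⊕ A ⊕ ... ⊕ A^{n-1}` in max algebra. -/
noncomputable def klStar {n : ℕ} (A : Matrix (Fin n) (Fin n) NNReal) :
    Matrix (Fin n) (Fin n) NNReal :=
  fun i j => (Finset.range n).sup fun k => mPow A k i j

/-- Partial "sums" `I ⊕ A ⊕ ... ⊕ A^m` of the Kleene star series. -/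
noncomputable def kPartial {n : ℕ} (A : Matrix (Fin n) (Fin n) NNReal) (m : ℕ) :
    Matrix (Fin n) (Fin n) NNReal :=
  fun i j => (Finset.range (m + 1)).sup fun k => mPow A k i j

/-- The weight of the cycle given by the list `l` (with wrap-around edge). -/
def cycleWeight {n : ℕ} (A : Matrix (Fin n) (Fin n) NNReal) (l : List (Fin n)) : NNReal :=
  ((l.zip (l.rotate 1)).map fun p => A p.1 p.2).prod

/-- The geometric mean of a cycle: `w(σ,A)^{1/k}`. -/
noncomputable def cycleMean {n : ℕ} (A : Matrix (Fin n) (Fin n) NNReal) (l : List (Fin n)) :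
    NNReal :=
  (cycleWeight A l) ^ ((l.length : ℝ)⁻¹)

/-- The maximum cycle geometric mean `λ(A)`. -/
noncomputable def maxCycleMean {n : ℕ} (A : Matrix (Fin n) (Fin n) NNReal) : NNReal :=
  sSup {x | ∃ l : List (Fin n), l ≠ [] ∧ x = cycleMean A l}

/-- `(i,j)` is a critical edge: it lies on a cycle attaining `λ(A)`. -/
def criticalEdge {n : ℕ} (A : Matrix (Fin n) (Fin n) NNReal) (i j : Fin n) : Prop :=
  ∃ l : List (Fin n), l ≠ [] ∧ cycleMean A l = maxCycleMean A ∧ (i, j) ∈ l.zip (l.rotate 1)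

/-- Max-algebraic matrix-vector product. -/
noncomputable def mVec {n : ℕ} (A : Matrix (Fin n) (Fin n) NNReal) (x : Fin n → NNReal) :
    Fin n → NNReal :=
  fun i => univ.sup fun j => A i j * x j

/-- The subeigencone `V*(A) = {y : A ⊗ y ≤ λ(A) y}`. -/
def Vstar {n : ℕ} (A : Matrix (Fin n) (Fin n) NNReal) : Set (Fin n → NNReal) :=
  {y | ∀ i, mVec A y i ≤ maxCycleMean A * y i}

lemma prod_rpow_const {m : ℕ} (x : NNReal) (hx : x ≠ 0) (c : Fin m → ℝ) :
    ∏ k, x ^ (c k) = x ^ (∑ k, c k) := by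
  induction m with
  | zero => simp
  | succ m ih =>
    rw [Fin.prod_univ_succ, Fin.sum_univ_succ, NNReal.rpow_add hx, ih (fun k => c k.succ)]

/-- `V*(A)` is a max cone, a convex cone, and a log-convex set. -/
theorem stmt_8 {n : ℕ} (A : Matrix (Fin n) (Fin n) NNReal)
    (hlam : 0 < maxCycleMean A) :
    (∀ y z, y ∈ Vstar A → z ∈ Vstar A → (fun i => max (y i) (z i)) ∈ Vstar A) ∧
    (∀ (c : NNReal) (y), y ∈ Vstar A → (fun i => c * y i) ∈ Vstar A) ∧
    (∀ y z, y ∈ Vstar A → z ∈ Vstar A → (fun i => y i + z i) ∈ Vstar A) ∧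
    (∀ (m : ℕ) (y : Fin m → Fin n → NNReal) (c : Fin m → ℝ),
      (∀ k, y k ∈ Vstar A) → (∀ k, 0 ≤ c k) → (∑ k, c k) = 1 →
      (fun i => ∏ k, (y k i) ^ (c k)) ∈ Vstar A) := by
  refine ⟨?_, ?_, ?_, ?_⟩
  · intro y z hy hz i
    apply Finset.sup_le
    intro j _
    rw [mul_max_of_nonneg _ _ zero_le, mul_max_of_nonneg _ _ zero_le]
    exact max_le_max ((Finset.le_sup (Finset.mem_univ j)).trans (hy i))
      ((Finset.le_sup (Finset.mem_univ j)).trans (hz i))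
  · intro c y hy i
    apply Finset.sup_le
    intro j _
    calc A i j * (c * y j) = c * (A i j * y j) := by ring
    _ ≤ c * (maxCycleMean A * y i) :=
      mul_le_mul_right ((Finset.le_sup (Finset.mem_univ j)).trans (hy i)) c
    _ = maxCycleMean A * (c * y i) := by ring
  · intro y z hy hz i
    apply Finset.sup_le
    intro j _
    calc A i j * (y j + z j) = A i j * y j + A i j * z j := by ring
    _ ≤ maxCycleMean A * y i + maxCycleMean A * z i :=
      add_le_add ((Finset.le_sup (Finset.mem_univ j)).trans (hy i))
        ((Finset.le_sup (Finset.mem_univ j)).trans (hz i))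
    _ = maxCycleMean A * (y i + z i) := by ring
  · intro m y c hy hc hsum i
    apply Finset.sup_le
    intro j _
    by_cases hA : A i j = 0
    · simp [hA]
    calc A i j * ∏ k, (y k j) ^ (c k)
        = (∏ k, (A i j) ^ (c k)) * ∏ k, (y k j) ^ (c k) := by
          rw [prod_rpow_const _ hA, hsum, NNReal.rpow_one]
    _ = ∏ k, (A i j * y k j) ^ (c k) := by
          rw [← Finset.prod_mul_distrib]
          exact Finset.prod_congr rfl fun k _ => (NNReal.mul_rpow).symm
    _ ≤ ∏ k, (maxCycleMean A * y k i) ^ (c k) := by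
          apply Finset.prod_le_prod
          · intro k _; exact zero_le
          · intro k _
            exact NNReal.rpow_le_rpow
              ((Finset.le_sup (Finset.mem_univ j)).trans (hy k i)) (hc k)
    _ = (∏ k, (maxCycleMean A) ^ (c k)) * ∏ k, (y k i) ^ (c k) := by
          rw [← Finset.prod_mul_distrib]
          exact Finset.prod_congr rfl fun k _ => NNReal.mul_rpow
    _ = maxCycleMean A * ∏ k, (y k i) ^ (c k) := by
          rw [prod_rpow_const _ hlam.ne', hsum, NNReal.rpow_one]
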